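/- arXiv:1901.06644 — 5 statements merged into one kernel-verified Lean document; each statement's English description precedes it below -/
import Mathlib

section
/- Let H and G be independent exponentially distributed random variables with means Ω_k > 0 and Ω_I > 0 respectively. Let τ > 0, ρ > 0, ε > 0, and θ ≥ τ. Then P( H > θ and G < (H - τ)/(ε ρ τ) ) = e^{-θ/Ω_k} - (ε ρ τ Ω_I / (Ω_k + ε ρ τ Ω_I)) · e^{ -θ(Ω_k + ε ρ τ Ω_I)/(ε ρ τ Ω_I Ω_k) + 1/(ε ρ Ω_I) }. -/
set_option maxHeartbeats 1000000

open MeasureTheory ProbabilityTheory Real Set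

lemma integral_exp_neg_mul_Ioi {b : ℝ} (hb : 0 < b) (c : ℝ) :
    ∫ x in Ioi c, exp (-(b * x)) = exp (-(b * c)) / b := by
  have h := integral_comp_mul_left_Ioi (fun x => exp (-x)) c hb
  simp only [smul_eq_mul] at h
  rw [h, integral_exp_neg_Ioi]
  ring

lemma expMeasure_eq (r : ℝ) :
    expMeasure r = volume.withDensity (exponentialPDF r) := rfl

lemma expMeasure_Iio {r x : ℝ} (hr : 0 < r) (hx : 0 ≤ x) :
    expMeasure r (Iio x) = ENNReal.ofReal (1 - exp (-(r * x))) := by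
  rw [expMeasure_eq, withDensity_apply _ measurableSet_Iio,
    setLIntegral_congr (Iio_ae_eq_Iic (a := x)),
    lintegral_exponentialPDF_eq_antiDeriv hr, if_pos hx]


lemma split_aux {a b cc : ℝ} (hcc : cc ≠ 0) (τ h : ℝ) :
    a * exp (-(a * h)) * (1 - exp (-(b * ((h - τ) / cc)))) =
      a * exp (-(a * h)) - a * exp (b * τ / cc) * exp (-((a + b / cc) * h)) := by
  have key : exp (b * τ / cc) * exp (-((a + b / cc) * h))
      = exp (-(a * h)) * exp (-(b * ((h - τ) / cc))) := by
    rw [← exp_add, ← exp_add]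
    congr 1
    field_simp
    ring
  linear_combination a * key

lemma final_algebra (Omk OmI τ ρ ε θ : ℝ) (hOmk : 0 < Omk) (hOmI : 0 < OmI)
    (hτ : 0 < τ) (hρ : 0 < ρ) (hε : 0 < ε) :
    exp (-(1 / Omk * θ)) - 1 / Omk * exp (1 / OmI * τ / (ε * ρ * τ)) *
      (exp (-((1 / Omk + 1 / OmI / (ε * ρ * τ)) * θ)) / (1 / Omk + 1 / OmI / (ε * ρ * τ))) =
    exp (-θ / Omk) - ε * ρ * τ * OmI / (Omk + ε * ρ * τ * OmI) *
      exp (-θ * (Omk + ε * ρ * τ * OmI) / (ε * ρ * τ * OmI * Omk) + 1 / (ε * ρ * OmI)) := by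
  have e1 : -(1 / Omk * θ) = -θ / Omk := by ring
  have e2 : exp (-θ * (Omk + ε * ρ * τ * OmI) / (ε * ρ * τ * OmI * Omk) + 1 / (ε * ρ * OmI))
      = exp (1 / OmI * τ / (ε * ρ * τ)) * exp (-((1 / Omk + 1 / OmI / (ε * ρ * τ)) * θ)) := by
    rw [← exp_add]
    congr 1
    field_simp
    ring
  have hdpos : (0:ℝ) < 1 / Omk + 1 / OmI / (ε * ρ * τ) := by positivity
  have e3 : (1 / Omk) / (1 / Omk + 1 / OmI / (ε * ρ * τ))
      = ε * ρ * τ * OmI / (Omk + ε * ρ * τ * OmI) := by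
    rw [div_eq_div_iff hdpos.ne' (by positivity : (0:ℝ) < Omk + ε * ρ * τ * OmI).ne']
    field_simp
    ring
  rw [e1, e2, ← e3]
  ring

/-- J₂: joint SIC success probability for two independent exponentials. -/
theorem prob_J2
    {Ω' : Type*} [MeasurableSpace Ω'] (μ : Measure Ω') [IsProbabilityMeasure μ]
    (H G : Ω' → ℝ) (Omk OmI τ ρ ε θ : ℝ)
    (hOmk : 0 < Omk) (hOmI : 0 < OmI) (hτ : 0 < τ) (hρ : 0 < ρ) (hε : 0 < ε)
    (hθ : τ ≤ θ)
    (hmH : Measurable H) (hmG : Measurable G)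
    (hindep : IndepFun H G μ)
    (hH : Measure.map H μ = expMeasure (1 / Omk))
    (hG : Measure.map G μ = expMeasure (1 / OmI)) :
    (μ {ω | H ω > θ ∧ G ω < (H ω - τ) / (ε * ρ * τ)}).toReal =
      exp (-θ / Omk) - (ε * ρ * τ * OmI / (Omk + ε * ρ * τ * OmI)) *
        exp (-θ * (Omk + ε * ρ * τ * OmI) / (ε * ρ * τ * OmI * Omk) + 1 / (ε * ρ * OmI)) := by
  set c := ε * ρ * τ with hc
  have hcpos : 0 < c := by positivity
  have hr1 : (0:ℝ) < 1 / Omk := by positivity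
  have hr2 : (0:ℝ) < 1 / OmI := by positivity
  set r1 : ℝ := 1 / Omk
  set r2 : ℝ := 1 / OmI
  have hθpos : 0 < θ := lt_of_lt_of_le hτ hθ
  haveI i1 : IsProbabilityMeasure (expMeasure r1) := isProbabilityMeasure_expMeasure hr1
  haveI i2 : IsProbabilityMeasure (expMeasure r2) := isProbabilityMeasure_expMeasure hr2
  set d : ℝ := r1 + r2 / c with hd
  have hdpos : 0 < d := by positivity
  set K : ℝ := r1 * exp (r2 * τ / c) with hK
  have hT : MeasurableSet {p : ℝ × ℝ | θ < p.1 ∧ p.2 < (p.1 - τ) / c} :=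
    (measurableSet_lt measurable_const measurable_fst).inter
      (measurableSet_lt measurable_snd ((measurable_fst.sub measurable_const).div_const c))
  have hmap : μ.map (fun ω => (H ω, G ω)) = (μ.map H).prod (μ.map G) :=
    (indepFun_iff_map_prod_eq_prod_map_map hmH.aemeasurable hmG.aemeasurable).mp hindep
  have hset : {ω | H ω > θ ∧ G ω < (H ω - τ) / c} =
      (fun ω => (H ω, G ω)) ⁻¹' {p : ℝ × ℝ | θ < p.1 ∧ p.2 < (p.1 - τ) / c} := rfl
  rw [hset, ← Measure.map_apply (hmH.prodMk hmG) hT, hmap, hH, hG, Measure.prod_apply hT]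
  have hpt : ∀ h : ℝ,
      expMeasure r2 (Prod.mk h ⁻¹' {p : ℝ × ℝ | θ < p.1 ∧ p.2 < (p.1 - τ) / c}) =
      (Ioi θ).indicator (fun h => ENNReal.ofReal (1 - exp (-(r2 * ((h - τ) / c))))) h := by
    intro h
    by_cases hh : θ < h
    · have hpre : Prod.mk h ⁻¹' {p : ℝ × ℝ | θ < p.1 ∧ p.2 < (p.1 - τ) / c}
          = Iio ((h - τ) / c) := by
        ext g; simp [hh, Iio]
      rw [hpre, expMeasure_Iio hr2 (div_nonneg (by linarith) hcpos.le),
        indicator_of_mem (mem_Ioi.mpr hh)]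
    · have hpre : Prod.mk h ⁻¹' {p : ℝ × ℝ | θ < p.1 ∧ p.2 < (p.1 - τ) / c} = ∅ := by
        ext g; simp [hh]
      rw [hpre, measure_empty]; exact (indicator_of_notMem (by simpa using hh) _).symm
  rw [lintegral_congr hpt, lintegral_indicator measurableSet_Ioi _]
  have hmeasPDF : Measurable (exponentialPDF r1) := by
    intro s hs
    exact (measurable_exponentialPDFReal r1).ennreal_ofReal hs
  rw [expMeasure_eq, restrict_withDensity measurableSet_Ioi,
    lintegral_withDensity_eq_lintegral_mul _ hmeasPDF
      (by measurability)]
  set f : ℝ → ℝ := fun h => r1 * exp (-(r1 * h)) - K * exp (-(d * h)) with hf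
  have hfeq : ∀ h : ℝ, r1 * exp (-(r1 * h)) * (1 - exp (-(r2 * ((h - τ) / c)))) = f h :=
    fun h => split_aux hcpos.ne' τ h
  have hint : ∀ h ∈ Ioi θ,
      (exponentialPDF r1 * fun h => ENNReal.ofReal (1 - exp (-(r2 * ((h - τ) / c))))) h
        = ENNReal.ofReal (f h) := by
    intro h hh
    have h0 : (0:ℝ) ≤ h := le_of_lt (lt_trans hθpos hh)
    simp only [Pi.mul_apply, exponentialPDF_of_nonneg h0]
    rw [← ENNReal.ofReal_mul (by positivity), hfeq]
  rw [setLIntegral_congr_fun measurableSet_Ioi hint]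
  have hnonneg : ∀ h ∈ Ioi θ, 0 ≤ f h := by
    intro h hh
    rw [← hfeq h]
    have : exp (-(r2 * ((h - τ) / c))) ≤ 1 := by
      apply exp_le_one_iff.mpr
      have : (0:ℝ) ≤ (h - τ) / c := div_nonneg (by simp at hh; linarith) hcpos.le
      nlinarith
    have h2 : (0:ℝ) ≤ r1 * exp (-(r1 * h)) := by positivity
    nlinarith
  have hInt1 : IntegrableOn (fun h => r1 * exp (-(r1 * h))) (Ioi θ) := by
    simpa only [neg_mul, IntegrableOn] using (exp_neg_integrableOn_Ioi θ hr1).const_mul r1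
  have hInt2 : IntegrableOn (fun h => K * exp (-(d * h))) (Ioi θ) := by
    simpa only [neg_mul, IntegrableOn] using (exp_neg_integrableOn_Ioi θ hdpos).const_mul K
  have hInt : IntegrableOn f (Ioi θ) := hInt1.sub hInt2
  rw [← ofReal_integral_eq_lintegral_ofReal hInt
      (ae_restrict_of_forall_mem measurableSet_Ioi hnonneg),
    ENNReal.toReal_ofReal (integral_nonneg_of_ae
      (ae_restrict_of_forall_mem measurableSet_Ioi hnonneg))]
  have hval : ∫ h in Ioi θ, f h = exp (-(r1 * θ)) - K * (exp (-(d * θ)) / d) := by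
    rw [hf, integral_sub hInt1 hInt2, integral_const_mul, integral_const_mul,
      integral_exp_neg_mul_Ioi hr1, integral_exp_neg_mul_Ioi hdpos,
      mul_comm r1, div_mul_cancel₀ _ hr1.ne']
  rw [hval]
  exact final_algebra Omk OmI τ ρ ε θ hOmk hOmI hτ hρ hε
end

section
/- Let H be exponentially distributed with mean Ω > 0 and let ρ, b_l, b_t, ϖ, γ_l, γ_t > 0 satisfy b_l > ϖ γ_l and b_t > (b_l + ϖ) γ_t. Then P( ρ H b_t/(ρ H b_l + ρ ϖ H + 1) > γ_t and ρ H b_l/(ρ ϖ H + 1) > γ_l ) = e^{-θ/Ω}, where θ = max(τ, ξ), τ = γ_l/(ρ(b_l - ϖ γ_l)), ξ = γ_t/(ρ(b_t - b_l γ_t - ϖ γ_t)). -/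
open MeasureTheory ProbabilityTheory Real Set

lemma expMeasure_Iic {r : ℝ} (hr : 0 < r) (t : ℝ) :
    expMeasure r (Iic t) = ENNReal.ofReal (if 0 ≤ t then 1 - Real.exp (-(r * t)) else 0) := by
  rw [expMeasure, gammaMeasure, withDensity_apply _ measurableSet_Iic,
    ← lintegral_exponentialPDF_eq_antiDeriv hr]
  rfl

/-- Joint SIC-decoding success probability at the nearby user with perfect SIC. -/
theorem prob_joint_sic_success
    {Ω' : Type*} [MeasurableSpace Ω'] (μ : Measure Ω') [IsProbabilityMeasure μ]
    (H : Ω' → ℝ) (Om ρ bl bt ϖ γl γt : ℝ)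
    (hOm : 0 < Om) (hρ : 0 < ρ) (hbl : 0 < bl) (hbt : 0 < bt) (hϖ : 0 < ϖ)
    (hγl : 0 < γl) (hγt : 0 < γt)
    (hc1 : bl > ϖ * γl) (hc2 : bt > (bl + ϖ) * γt)
    (hmH : Measurable H)
    (hH : Measure.map H μ = expMeasure (1 / Om)) :
    (μ {ω | ρ * H ω * bt / (ρ * H ω * bl + ρ * ϖ * H ω + 1) > γt ∧
            ρ * H ω * bl / (ρ * ϖ * H ω + 1) > γl}).toReal =
      exp (-(max (γl / (ρ * (bl - ϖ * γl))) (γt / (ρ * (bt - bl * γt - ϖ * γt)))) / Om) := by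
  set r : ℝ := 1 / Om with hr'
  have hr : 0 < r := by positivity
  have hd1 : 0 < bl - ϖ * γl := by linarith
  have hd2 : 0 < bt - bl * γt - ϖ * γt := by nlinarith
  set τ : ℝ := γl / (ρ * (bl - ϖ * γl)) with hτ'
  set ξ : ℝ := γt / (ρ * (bt - bl * γt - ϖ * γt)) with hξ'
  have hτpos : 0 < τ := by positivity
  have hξpos : 0 < ξ := by positivity
  set θ : ℝ := max τ ξ with hθ'
  have hθpos : 0 < θ := lt_max_of_lt_left hτpos
  set S : Set ℝ := {x | ρ * x * bt / (ρ * x * bl + ρ * ϖ * x + 1) > γt ∧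
      ρ * x * bl / (ρ * ϖ * x + 1) > γl} with hS'
  have hmS : MeasurableSet S := by
    apply MeasurableSet.inter
    · exact measurableSet_lt measurable_const
        ((measurable_const.mul measurable_id |>.mul measurable_const).div
          (((measurable_const.mul measurable_id |>.mul measurable_const).add
            (measurable_const.mul measurable_id)).add measurable_const))
    · exact measurableSet_lt measurable_const
        ((measurable_const.mul measurable_id |>.mul measurable_const).div
          ((measurable_const.mul measurable_id).add measurable_const))
  have hmap : μ {ω | ρ * H ω * bt / (ρ * H ω * bl + ρ * ϖ * H ω + 1) > γt ∧
      ρ * H ω * bl / (ρ * ϖ * H ω + 1) > γl} = expMeasure r S := by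
    rw [← hH, Measure.map_apply hmH hmS]
    rfl
  have hinter : S ∩ Ioi 0 = Ioi θ := by
    ext x
    simp only [hS', mem_inter_iff, mem_setOf_eq, mem_Ioi, gt_iff_lt]
    constructor
    · rintro ⟨⟨h1, h2⟩, hx⟩
      have hden1 : 0 < ρ * x * bl + ρ * ϖ * x + 1 := by positivity
      have hden2 : 0 < ρ * ϖ * x + 1 := by positivity
      rw [lt_div_iff₀ hden1] at h1
      rw [lt_div_iff₀ hden2] at h2
      rw [hθ', max_lt_iff]
      constructor
      · rw [hτ', div_lt_iff₀ (by positivity)]; nlinarith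
      · rw [hξ', div_lt_iff₀ (by positivity)]; nlinarith
    · intro hx
      have hxpos : 0 < x := hθpos.trans hx
      have hτx : τ < x := (le_max_left _ _).trans_lt hx
      have hξx : ξ < x := (le_max_right _ _).trans_lt hx
      rw [hτ', div_lt_iff₀ (by positivity)] at hτx
      rw [hξ', div_lt_iff₀ (by positivity)] at hξx
      have hden1 : 0 < ρ * x * bl + ρ * ϖ * x + 1 := by positivity
      have hden2 : 0 < ρ * ϖ * x + 1 := by positivity
      refine ⟨⟨?_, ?_⟩, hxpos⟩
      · rw [lt_div_iff₀ hden1]; nlinarith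
      · rw [lt_div_iff₀ hden2]; nlinarith
  have hIic0 : expMeasure r (Iic (0 : ℝ)) = 0 := by
    rw [expMeasure_Iic hr]
    simp
  have hSeq : expMeasure r S = expMeasure r (Ioi θ) := by
    apply le_antisymm
    · calc expMeasure r S ≤ expMeasure r ((S ∩ Ioi 0) ∪ Iic 0) := by
            apply measure_mono
            intro x hx
            rcases le_or_gt x 0 with h | h
            · exact Or.inr h
            · exact Or.inl ⟨hx, h⟩
        _ ≤ expMeasure r (S ∩ Ioi 0) + expMeasure r (Iic 0) := measure_union_le _ _
        _ = expMeasure r (Ioi θ) := by rw [hinter, hIic0, add_zero]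
    · rw [← hinter]; exact measure_mono inter_subset_left
  have : IsProbabilityMeasure (expMeasure r) := isProbabilityMeasure_expMeasure hr
  have hIoi : expMeasure r (Ioi θ) = ENNReal.ofReal (Real.exp (-(r * θ))) := by
    have : Ioi θ = (Iic θ)ᶜ := by simp
    rw [this, prob_compl_eq_one_sub measurableSet_Iic, expMeasure_Iic hr, if_pos hθpos.le,
      ENNReal.ofReal_sub _ (Real.exp_pos _).le, ENNReal.ofReal_one,
      ENNReal.sub_sub_cancel ENNReal.one_ne_top
        (ENNReal.ofReal_le_one.2 (Real.exp_le_one_iff.2 (by nlinarith)))]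
  rw [hmap, hSeq, hIoi, ENNReal.toReal_ofReal (Real.exp_pos _).le]
  congr 1
  field_simp [hr']
  rw [hr']; field_simp
end

section
/- Let H_t, H_l, G be mutually independent exponentials with means Ω_t, Ω_l, Ω_I > 0 (with no external interference Z' = 0). For β_l, β_t, ρ, ε, a_t > 0, define φ = (Ω_l + ρ β_l a_t Ω_t)/(Ω_l Ω_t). Then P( H_t > β_t(ε ρ G + 1) and H_l > β_l(ρ a_t H_t + 1) ) = e^{-β_l/Ω_l - β_t φ} / ( φ Ω_t (1 + ε ρ β_t φ Ω_I) ). -/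
open MeasureTheory ProbabilityTheory Real Set Filter Topology
open scoped ENNReal NNReal

section Helpers

lemma my_integral_exp_neg_mul_Ioi {b : ℝ} (hb : 0 < b) (c : ℝ) :
    ∫ x in Set.Ioi c, Real.exp (-(b * x)) = Real.exp (-(b * c)) / b := by
  have hderiv : ∀ x ∈ Set.Ici c,
      HasDerivAt (fun a => -Real.exp (-(b * a)) / b) (Real.exp (-(b * x))) x := by
    intro x _
    have h := (ProbabilityTheory.hasDerivAt_neg_exp_mul_exp (r := b) (x := x)).div_const b
    simpa [mul_div_assoc, mul_div_cancel_left₀ _ (ne_of_gt hb)] using h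
  have hint : IntegrableOn (fun x => Real.exp (-(b * x))) (Set.Ioi c) := by
    simpa [neg_mul] using exp_neg_integrableOn_Ioi c hb
  have htend : Tendsto (fun x => -Real.exp (-(b * x)) / b) atTop (𝓝 0) := by
    have h1 : Tendsto (fun x : ℝ => Real.exp (-(b * x))) atTop (𝓝 0) := by
      refine Real.tendsto_exp_neg_atTop_nhds_zero.comp ?_
      exact Tendsto.const_mul_atTop hb tendsto_id
    have := (h1.neg).div_const b
    simpa using this
  have := integral_Ioi_of_hasDerivAt_of_tendsto' hderiv hint htend
  rw [this]; ring

lemma measurable_expPDF (r : ℝ) : Measurable (exponentialPDF r) :=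
  (measurable_exponentialPDFReal r).ennreal_ofReal

lemma exp_tail_lintegral {r : ℝ} (hr : 0 < r) {a : ℝ} (ha : 0 ≤ a) {c : ℝ} (hc : 0 ≤ c) (b : ℝ) :
    ∫⁻ x in Set.Ioi c, ENNReal.ofReal (Real.exp (-(a * x + b))) ∂(expMeasure r)
      = ENNReal.ofReal (r / (r + a) * Real.exp (-((r + a) * c + b))) := by
  have hra : 0 < r + a := by linarith
  have hg : Measurable fun x : ℝ => ENNReal.ofReal (Real.exp (-(a * x + b))) := by
    fun_prop
  have h0 : expMeasure r = volume.withDensity (exponentialPDF r) := rfl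
  rw [h0, setLIntegral_withDensity_eq_setLIntegral_mul _ (measurable_expPDF r) hg
    measurableSet_Ioi]
  have h1 : ∀ x ∈ Set.Ioi c,
      (exponentialPDF r * fun x => ENNReal.ofReal (Real.exp (-(a * x + b)))) x
        = ENNReal.ofReal (r * Real.exp (-((r + a) * x + b))) := by
    intro x hx
    have hx0 : (0:ℝ) ≤ x := le_trans hc (le_of_lt hx)
    simp only [Pi.mul_apply, exponentialPDF_of_nonneg hx0]
    rw [← ENNReal.ofReal_mul (by positivity)]
    congr 1
    rw [mul_assoc, ← Real.exp_add]
    ring_nf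
  rw [setLIntegral_congr_fun measurableSet_Ioi h1]
  have hint : IntegrableOn (fun x => r * Real.exp (-((r + a) * x + b))) (Set.Ioi c) := by
    have h2 := (exp_neg_integrableOn_Ioi c hra).const_mul (r * Real.exp (-b))
    refine IntegrableOn.congr_fun h2 (fun x _ => ?_) measurableSet_Ioi
    rw [mul_assoc, ← Real.exp_add]
    ring_nf
  rw [← ofReal_integral_eq_lintegral_ofReal hint (ae_of_all _ fun x => by positivity)]
  congr 1
  have h3 : ∀ x ∈ Set.Ioi c, r * Real.exp (-((r + a) * x + b))
      = (r * Real.exp (-b)) * Real.exp (-((r + a) * x)) := by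
    intro x _
    rw [mul_assoc, ← Real.exp_add]
    ring_nf
  rw [setIntegral_congr_fun measurableSet_Ioi h3, integral_const_mul,
    my_integral_exp_neg_mul_Ioi hra c]
  rw [neg_add, Real.exp_add]
  field_simp

lemma expMeasure_Ioi {r : ℝ} (hr : 0 < r) {c : ℝ} (hc : 0 ≤ c) :
    expMeasure r (Set.Ioi c) = ENNReal.ofReal (Real.exp (-(r * c))) := by
  have h := exp_tail_lintegral hr le_rfl hc 0
  simp only [zero_mul, zero_add, add_zero, neg_zero, Real.exp_zero, ENNReal.ofReal_one,
    lintegral_one, Measure.restrict_apply_univ, div_self hr.ne', one_mul] at h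
  exact h

lemma expMeasure_ae_pos {r : ℝ} : ∀ᵐ x ∂(expMeasure r), 0 < x := by
  rw [ae_iff]
  have h : {x : ℝ | ¬ 0 < x} = Set.Iic 0 := by ext x; simp
  rw [h]
  have h0 : expMeasure r = volume.withDensity (exponentialPDF r) := rfl
  rw [h0, withDensity_apply _ measurableSet_Iic,
    Measure.restrict_congr_set Iio_ae_eq_Iic.symm,
    lintegral_exponentialPDF_of_nonpos le_rfl]

end Helpers

/-- Θ₁ of Appendix B with zero inter-antenna interference: joint decoding probability
at the relay with residual imperfect-SIC interference. -/
theorem prob_theta1_no_is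
    {Ω' : Type*} [MeasurableSpace Ω'] (μ : Measure Ω') [IsProbabilityMeasure μ]
    (X : Fin 3 → Ω' → ℝ) (Omt Oml OmI βl βt ρ ε at_ : ℝ)
    (hOmt : 0 < Omt) (hOml : 0 < Oml) (hOmI : 0 < OmI)
    (hβl : 0 < βl) (hβt : 0 < βt) (hρ : 0 < ρ) (hε : 0 < ε) (hat : 0 < at_)
    (hmeas : ∀ i, Measurable (X i))
    (hindep : iIndepFun X μ)
    (hHt : Measure.map (X 0) μ = expMeasure (1 / Omt))
    (hHl : Measure.map (X 1) μ = expMeasure (1 / Oml))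
    (hG : Measure.map (X 2) μ = expMeasure (1 / OmI)) :
    (μ {ω | X 0 ω > βt * (ε * ρ * X 2 ω + 1) ∧
            X 1 ω > βl * (ρ * at_ * X 0 ω + 1)}).toReal =
      exp (-βl / Oml - βt * ((Oml + ρ * βl * at_ * Omt) / (Oml * Omt))) /
        (((Oml + ρ * βl * at_ * Omt) / (Oml * Omt)) * Omt *
          (1 + ε * ρ * βt * ((Oml + ρ * βl * at_ * Omt) / (Oml * Omt)) * OmI)) := by
  have hr0 : (0:ℝ) < 1 / Omt := by positivity
  have hr1 : (0:ℝ) < 1 / Oml := by positivity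
  have hr2 : (0:ℝ) < 1 / OmI := by positivity
  haveI i0 : IsProbabilityMeasure (expMeasure (1 / Omt)) := isProbabilityMeasure_expMeasure hr0
  haveI i1 : IsProbabilityMeasure (expMeasure (1 / Oml)) := isProbabilityMeasure_expMeasure hr1
  haveI i2 : IsProbabilityMeasure (expMeasure (1 / OmI)) := isProbabilityMeasure_expMeasure hr2
  set φ : ℝ := (Oml + ρ * βl * at_ * Omt) / (Oml * Omt) with hφdef
  have hφ : 0 < φ := by
    apply div_pos
    · positivity
    · positivity
  set a1 : ℝ := βl * ρ * at_ / Oml with ha1def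
  set b1 : ℝ := βl / Oml with hb1def
  set a2 : ℝ := φ * βt * ε * ρ with ha2def
  set b2 : ℝ := φ * βt + βl / Oml with hb2def
  have ha1 : 0 ≤ a1 := by positivity
  have ha2 : 0 ≤ a2 := by positivity
  have hr0a1 : 1 / Omt + a1 = φ := by
    rw [ha1def, hφdef]; field_simp
  set T : Set ((ℝ × ℝ) × ℝ) :=
    {p | p.1.1 > βt * (ε * ρ * p.1.2 + 1) ∧ p.2 > βl * (ρ * at_ * p.1.1 + 1)} with hTdef
  have hmeasT : MeasurableSet T := by
    have : T = {p : (ℝ × ℝ) × ℝ | βt * (ε * ρ * p.1.2 + 1) < p.1.1}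
        ∩ {p : (ℝ × ℝ) × ℝ | βl * (ρ * at_ * p.1.1 + 1) < p.2} := rfl
    rw [this]
    exact (measurableSet_lt (by fun_prop) (by fun_prop)).inter
      (measurableSet_lt (by fun_prop) (by fun_prop))
  -- joint law
  have hind1 : IndepFun (fun ω => (X 0 ω, X 2 ω)) (X 1) μ :=
    hindep.indepFun_prodMk hmeas 0 2 1 (by decide) (by decide)
  have hind2 : IndepFun (X 0) (X 2) μ := hindep.indepFun (by decide)
  have hmap02 : μ.map (fun ω => (X 0 ω, X 2 ω))
      = (expMeasure (1 / Omt)).prod (expMeasure (1 / OmI)) := by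
    rw [← hHt, ← hG]
    exact (indepFun_iff_map_prod_eq_prod_map_map (hmeas 0).aemeasurable
      (hmeas 2).aemeasurable).mp hind2
  have hmap : μ.map (fun ω => ((X 0 ω, X 2 ω), X 1 ω))
      = ((expMeasure (1 / Omt)).prod (expMeasure (1 / OmI))).prod (expMeasure (1 / Oml)) := by
    rw [← hmap02, ← hHl]
    exact (indepFun_iff_map_prod_eq_prod_map_map ((hmeas 0).prodMk (hmeas 2)).aemeasurable
      (hmeas 1).aemeasurable).mp hind1
  have hμT : μ {ω | X 0 ω > βt * (ε * ρ * X 2 ω + 1) ∧ X 1 ω > βl * (ρ * at_ * X 0 ω + 1)}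
      = ((expMeasure (1 / Omt)).prod (expMeasure (1 / OmI))).prod (expMeasure (1 / Oml)) T := by
    rw [← hmap, Measure.map_apply (((hmeas 0).prodMk (hmeas 2)).prodMk (hmeas 1)) hmeasT]
    rfl
  rw [hμT]
  -- compute the product-measure of T
  set h₂ : ℝ × ℝ → ℝ≥0∞ := fun q =>
    Set.indicator {q : ℝ × ℝ | βt * (ε * ρ * q.2 + 1) < q.1}
      (fun q => ENNReal.ofReal (Real.exp (-(a1 * q.1 + b1)))) q with hh₂def
  have hh₂meas : Measurable h₂ := by
    refine Measurable.indicator (by fun_prop) ?_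
    exact measurableSet_lt (by fun_prop) (by fun_prop)
  have hae1 : ∀ᵐ p ∂((expMeasure (1 / Omt)).prod (expMeasure (1 / OmI))), 0 < p.1 := by
    rw [ae_iff]
    have hset : {p : ℝ × ℝ | ¬ 0 < p.1} = {x : ℝ | ¬ 0 < x} ×ˢ (Set.univ : Set ℝ) := by
      ext p; simp
    rw [hset, Measure.prod_prod]
    have h0 : expMeasure (1 / Omt) {x | ¬ 0 < x} = 0 := by
      rw [← ae_iff]; exact expMeasure_ae_pos
    rw [h0, zero_mul]
  rw [Measure.prod_apply hmeasT]
  have hstep1 : ∫⁻ p, expMeasure (1 / Oml) (Prod.mk p ⁻¹' T)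
        ∂((expMeasure (1 / Omt)).prod (expMeasure (1 / OmI)))
      = ∫⁻ p, h₂ p ∂((expMeasure (1 / Omt)).prod (expMeasure (1 / OmI))) := by
    refine lintegral_congr_ae ?_
    filter_upwards [hae1] with p hp
    by_cases hcond : βt * (ε * ρ * p.2 + 1) < p.1
    · have hset : Prod.mk p ⁻¹' T = Set.Ioi (βl * (ρ * at_ * p.1 + 1)) := by
        ext y; simp [hTdef, hcond]
      have hgp : (0:ℝ) ≤ βl * (ρ * at_ * p.1 + 1) := by
        have := mul_pos (mul_pos hρ hat) hp
        nlinarith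
      rw [hset, expMeasure_Ioi hr1 hgp]
      simp only [hh₂def, Set.indicator_apply, Set.mem_setOf_eq, if_pos hcond]
      congr 1
      rw [ha1def, hb1def]
      field_simp
    · have hset : Prod.mk p ⁻¹' T = ∅ := by
        ext y; simp [hTdef, hcond]
      rw [hset, measure_empty]
      simp only [hh₂def, Set.indicator_apply, Set.mem_setOf_eq, if_neg hcond]
  rw [hstep1, lintegral_prod_symm _ hh₂meas.aemeasurable]
  have hinner : ∀ x2 : ℝ, 0 < x2 → (∫⁻ x0, h₂ (x0, x2) ∂(expMeasure (1 / Omt)))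
      = ENNReal.ofReal (1 / (φ * Omt) * Real.exp (-(a2 * x2 + b2))) := by
    intro x2 hx2
    have h6 : ∀ x0 : ℝ, h₂ (x0, x2)
        = Set.indicator (Set.Ioi (βt * (ε * ρ * x2 + 1)))
            (fun x0 => ENNReal.ofReal (Real.exp (-(a1 * x0 + b1)))) x0 := by
      intro x0
      simp only [hh₂def, Set.indicator_apply, Set.mem_setOf_eq, Set.mem_Ioi]
    rw [lintegral_congr h6, lintegral_indicator measurableSet_Ioi]
    have hc0 : (0:ℝ) ≤ βt * (ε * ρ * x2 + 1) := by
      have := mul_pos (mul_pos hε hρ) hx2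
      nlinarith
    rw [exp_tail_lintegral hr0 ha1 hc0 b1, hr0a1]
    congr 1
    have hOmtne : Omt ≠ 0 := hOmt.ne'
    have hφne : φ ≠ 0 := hφ.ne'
    have e1 : 1 / Omt / φ = 1 / (φ * Omt) := by
      rw [div_div, mul_comm]
    rw [e1]
    congr 2
    rw [ha2def, hb2def, hb1def]
    ring
  have houter : ∫⁻ x2, (∫⁻ x0, h₂ (x0, x2) ∂(expMeasure (1 / Omt))) ∂(expMeasure (1 / OmI))
      = ∫⁻ x2, ENNReal.ofReal (1 / (φ * Omt) * Real.exp (-(a2 * x2 + b2)))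
          ∂(expMeasure (1 / OmI)) :=
    lintegral_congr_ae (expMeasure_ae_pos.mono fun x2 hx2 => hinner x2 hx2)
  rw [houter]
  have hK : (0:ℝ) ≤ 1 / (φ * Omt) := by positivity
  have hsplit : ∀ x2 : ℝ, ENNReal.ofReal (1 / (φ * Omt) * Real.exp (-(a2 * x2 + b2)))
      = ENNReal.ofReal (1 / (φ * Omt)) * ENNReal.ofReal (Real.exp (-(a2 * x2 + b2))) :=
    fun x2 => ENNReal.ofReal_mul hK
  rw [lintegral_congr hsplit, lintegral_const_mul _ (by fun_prop)]
  have hrestr : (expMeasure (1 / OmI)).restrict (Set.Ioi (0:ℝ)) = expMeasure (1 / OmI) :=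
    Measure.restrict_eq_self_of_ae_mem (expMeasure_ae_pos.mono fun x hx => hx)
  rw [← hrestr, exp_tail_lintegral hr2 ha2 le_rfl b2, ← ENNReal.ofReal_mul hK]
  rw [ENNReal.toReal_ofReal (by positivity)]
  -- final arithmetic
  have hden2 : (0:ℝ) < 1 / OmI + a2 := by positivity
  have hexp : -βl / Oml - βt * φ = -((1 / OmI + a2) * 0 + b2) := by
    rw [hb2def]; ring
  rw [hexp]
  have h1 : (0:ℝ) < 1 + ε * ρ * βt * φ * OmI := by positivity
  have hc : (1 / OmI) / (1 / OmI + a2) = 1 / (1 + ε * ρ * βt * φ * OmI) := by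
    rw [ha2def, div_eq_div_iff hden2.ne' h1.ne', one_mul]
    field_simp [hOmI.ne']
    try ring
  rw [ha2def] at hc
  rw [hc]
  rw [eq_div_iff (by positivity : (φ * Omt * (1 + ε * ρ * βt * φ * OmI)) ≠ 0)]
  field_simp
  try ring
end

section
/- Fix positive constants a_l, a_t, b_l, ε, Ω_l, Ω_t, Ω_k, Ω_I and define, for ρ > 0, Ψ(ρ) = (a_l Ω_l + b_l Ω_k)/(ρ a_l b_l Ω_l Ω_k), Λ1 = ε Ω_I/(b_l Ω_k), Λ2 = a_t Ω_t/(a_l Ω_l) (assume Λ1, Λ2, 1 pairwise distinct), and R(ρ) = -(1/(2 ln 2))[ A e^{Ψ} Ei(-Ψ) + (B/Λ1) e^{Ψ/Λ1} Ei(-Ψ/Λ1) + (C/Λ2) e^{Ψ/Λ2} Ei(-Ψ/Λ2) ] with A = 1/((Λ1-1)(Λ2-1)), B = (A(Λ1 - Λ1Λ2) - Λ1)/(Λ2 - Λ1), C = 1 - A - B. Then lim_{ρ→∞} R(ρ)/log₂ ρ = 0. -/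
open MeasureTheory Real Filter

/-- The exponential integral `Ei x = -∫_{-x}^∞ e^{-t}/t dt`. -/
noncomputable def expIntegralEi (x : ℝ) : ℝ := -∫ t in Set.Ioi (-x), exp (-t) / t

open Set

lemma intOnEi {x : ℝ} (hx : 0 < x) : IntegrableOn (fun t => exp (-t) / t) (Ioi x) := by
  have hmeas : AEStronglyMeasurable (fun t => exp (-t) / t) (volume.restrict (Ioi x)) := by
    apply ContinuousOn.aestronglyMeasurable _ measurableSet_Ioi
    exact ContinuousOn.div (Continuous.continuousOn (by continuity)) continuousOn_id
      (fun t ht => ne_of_gt (hx.trans ht))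
  have hint : IntegrableOn (fun t => exp (-t) / x) (Ioi x) := by
    have := (exp_neg_integrableOn_Ioi x one_pos).div_const x
    simpa [IntegrableOn] using this
  refine Integrable.mono' hint hmeas ?_
  filter_upwards [ae_restrict_mem measurableSet_Ioi] with t ht
  rw [Real.norm_eq_abs, abs_of_pos (div_pos (exp_pos _) (hx.trans ht))]
  exact div_le_div_of_nonneg_left (exp_pos _).le hx (le_of_lt ht)

lemma Ei_eq {x : ℝ} : expIntegralEi (-x) = -∫ t in Ioi x, exp (-t) / t := by
  simp [expIntegralEi]

lemma Ei_log_bound {x : ℝ} (hx : 0 < x) (hx1 : x ≤ 1) :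
    |expIntegralEi (-x) - log x| ≤ 1 := by
  have hIoc : IntegrableOn (fun t => exp (-t) / t) (Ioc x 1) :=
    (intOnEi hx).mono_set Ioc_subset_Ioi_self
  have hIoi : IntegrableOn (fun t => exp (-t) / t) (Ioi 1) :=
    (intOnEi hx).mono_set (Ioi_subset_Ioi hx1)
  have hsplit : (∫ t in Ioi x, exp (-t) / t) =
      (∫ t in Ioc x 1, exp (-t) / t) + ∫ t in Ioi 1, exp (-t) / t := by
    rw [← setIntegral_union (Ioc_disjoint_Ioi le_rfl) measurableSet_Ioi hIoc hIoi,
      Ioc_union_Ioi_eq_Ioi hx1]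
  -- bounds on I2
  have hI2u : (∫ t in Ioi 1, exp (-t) / t) ≤ 1 := by
    have h1 : (∫ t in Ioi 1, exp (-t) / t) ≤ ∫ t in Ioi (1:ℝ), exp (-t) := by
      apply setIntegral_mono_on hIoi (exp_neg_integrableOn_Ioi 1 one_pos |>.congr_fun
        (fun t _ => by norm_num) measurableSet_Ioi) measurableSet_Ioi
      intro t ht
      rw [div_le_iff₀ (by linarith [ht.out])]
      nlinarith [exp_pos (-t), ht.out]
    calc (∫ t in Ioi 1, exp (-t) / t) ≤ _ := h1
      _ = exp (-1) := integral_exp_neg_Ioi 1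
      _ ≤ 1 := by rw [exp_le_one_iff]; norm_num
  have hI2l : 0 ≤ ∫ t in Ioi 1, exp (-t) / t := by
    apply setIntegral_nonneg measurableSet_Ioi
    intro t ht
    exact div_nonneg (exp_pos _).le (by linarith [ht.out])
  -- bounds on I1
  have hone : IntegrableOn (fun t => 1 / t) (Ioc x 1) := by
    rw [← intervalIntegrable_iff_integrableOn_Ioc_of_le hx1]
    exact intervalIntegral.intervalIntegrable_one_div
      (fun t ht => by rw [uIcc_of_le hx1] at ht; exact ne_of_gt (lt_of_lt_of_le hx ht.1))
      continuousOn_id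
  have honeval : (∫ t in Ioc x 1, 1 / t) = -log x := by
    rw [← intervalIntegral.integral_of_le hx1, integral_one_div
      (by rw [uIcc_of_le hx1]; rintro ⟨h0, -⟩; linarith), one_div, log_inv]
  have hg : IntegrableOn (fun t => 1 / t - 1) (Ioc x 1) := hone.sub (integrableOn_const (by simp) (by simp))
  have hgval : (∫ t in Ioc x 1, (1 / t - 1)) = -log x - (1 - x) := by
    rw [integral_sub hone (integrableOn_const (by simp) (by simp)), honeval]
    simp [Real.volume_Ioc, hx1]
  have hI1u : (∫ t in Ioc x 1, exp (-t) / t) ≤ -log x := by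
    rw [← honeval]
    apply setIntegral_mono_on hIoc hone measurableSet_Ioc
    intro t ht
    have ht0 : 0 < t := hx.trans ht.1
    gcongr
    exact exp_le_one_iff.mpr (by linarith [ht.1])
  have hI1l : -log x - 1 ≤ ∫ t in Ioc x 1, exp (-t) / t := by
    have : (∫ t in Ioc x 1, (1 / t - 1)) ≤ ∫ t in Ioc x 1, exp (-t) / t := by
      apply setIntegral_mono_on hg hIoc measurableSet_Ioc
      intro t ht
      have ht0 : 0 < t := hx.trans ht.1
      rw [div_sub' (ne_of_gt ht0), div_le_div_iff₀ ht0 ht0]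
      nlinarith [add_one_le_exp (-t)]
    calc -log x - 1 ≤ -log x - (1 - x) := by linarith
      _ ≤ _ := hgval ▸ this
  rw [Ei_eq, hsplit]
  rw [abs_le]
  constructor <;> nlinarith [hI1u, hI1l, hI2u, hI2l]

lemma F_bound {y : ℝ} (hy : 0 < y) (hy1 : y ≤ 1) :
    |exp y * expIntegralEi (-y) - log y| ≤ 7 := by
  have h1 := Ei_log_bound hy hy1
  have hlog : log y ≤ 0 := log_nonpos hy.le hy1
  have hEi : |expIntegralEi (-y)| ≤ 1 - log y := by
    calc |expIntegralEi (-y)| ≤ |expIntegralEi (-y) - log y| + |log y| := by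
          simpa using abs_add_le (expIntegralEi (-y) - log y) (log y)
      _ ≤ 1 + -log y := by rw [abs_of_nonpos hlog]; linarith
      _ = 1 - log y := by ring
  have hylog : y * (-log y) ≤ 1 := by
    have := log_le_sub_one_of_pos (show (0:ℝ) < 1/y by positivity)
    rw [one_div, log_inv] at this
    calc y * (-log y) ≤ y * (y⁻¹ - 1) := by
          apply mul_le_mul_of_nonneg_left this hy.le
      _ = 1 - y := by field_simp
      _ ≤ 1 := by linarith
  have hexp : exp y - 1 ≤ exp 1 * y := by
    have h2 := add_one_le_exp (-y)
    have h3 : exp y * (1 - y) ≤ 1 := by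
      have h2' := mul_le_mul_of_nonneg_left h2 (exp_pos y).le
      rw [← exp_add, add_neg_cancel, exp_zero] at h2'
      nlinarith
    have h4 : exp y ≤ exp 1 := exp_le_exp.2 hy1
    nlinarith [exp_pos y]
  have key : |(exp y - 1) * expIntegralEi (-y)| ≤ 2 * exp 1 := by
    rw [abs_mul]
    have h5 : |exp y - 1| = exp y - 1 := abs_of_nonneg (by linarith [one_le_exp hy.le])
    calc |exp y - 1| * |expIntegralEi (-y)| ≤ (exp 1 * y) * (1 - log y) := by
          rw [h5]; apply mul_le_mul hexp hEi (abs_nonneg _) (by positivity)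
      _ = exp 1 * (y + y * (-log y)) := by ring
      _ ≤ exp 1 * (1 + 1) := by
          apply mul_le_mul_of_nonneg_left (by linarith) (exp_pos 1).le
      _ = 2 * exp 1 := by ring
  have : exp y * expIntegralEi (-y) - log y
      = (expIntegralEi (-y) - log y) + (exp y - 1) * expIntegralEi (-y) := by ring
  rw [this]
  calc |_| ≤ |expIntegralEi (-y) - log y| + |(exp y - 1) * expIntegralEi (-y)| := abs_add_le _ _
    _ ≤ 1 + 2 * exp 1 := by linarith
    _ ≤ 7 := by nlinarith [exp_one_lt_d9]

/-- Zero high-SNR slope of the ergodic rate of x_l with imperfect SIC. -/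
theorem zero_high_snr_slope
    (al at_ bl ε Oml Omt Omk OmI : ℝ)
    (hal : 0 < al) (hat : 0 < at_) (hbl : 0 < bl) (hε : 0 < ε)
    (hOml : 0 < Oml) (hOmt : 0 < Omt) (hOmk : 0 < Omk) (hOmI : 0 < OmI)
    (Λ1 Λ2 : ℝ)
    (hΛ1 : Λ1 = ε * OmI / (bl * Omk)) (hΛ2 : Λ2 = at_ * Omt / (al * Oml))
    (h12 : Λ1 ≠ Λ2) (h1 : Λ1 ≠ 1) (h2 : Λ2 ≠ 1)
    (A B C : ℝ)
    (hA : A = 1 / ((Λ1 - 1) * (Λ2 - 1)))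
    (hB : B = (A * (Λ1 - Λ1 * Λ2) - Λ1) / (Λ2 - Λ1))
    (hC : C = 1 - A - B)
    (Ψ R : ℝ → ℝ)
    (hΨ : ∀ ρ, Ψ ρ = (al * Oml + bl * Omk) / (ρ * al * bl * Oml * Omk))
    (hR : ∀ ρ, R ρ = -(1 / (2 * log 2)) *
      (A * exp (Ψ ρ) * expIntegralEi (-(Ψ ρ)) +
        (B / Λ1) * exp (Ψ ρ / Λ1) * expIntegralEi (-(Ψ ρ / Λ1)) +
        (C / Λ2) * exp (Ψ ρ / Λ2) * expIntegralEi (-(Ψ ρ / Λ2)))) :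
    Tendsto (fun ρ => R ρ / logb 2 ρ) atTop (nhds 0) := by
  have hΛ1p : 0 < Λ1 := by rw [hΛ1]; positivity
  have hΛ2p : 0 < Λ2 := by rw [hΛ2]; positivity
  have hΛ1n : Λ1 ≠ 0 := ne_of_gt hΛ1p
  have hΛ2n : Λ2 ≠ 0 := ne_of_gt hΛ2p
  have h1' : Λ1 - 1 ≠ 0 := sub_ne_zero.2 h1
  have h2' : Λ2 - 1 ≠ 0 := sub_ne_zero.2 h2
  have h12' : Λ2 - Λ1 ≠ 0 := sub_ne_zero.2 (Ne.symm h12)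
  have hS : A + B / Λ1 + C / Λ2 = 0 := by
    subst hC hB hA
    field_simp
    ring
  set c := 1 / (2 * log 2) with hc
  set M := |c| * (7 * |A| + 7 * |B / Λ1| + 7 * |C / Λ2|
      + |B / Λ1| * |log Λ1| + |C / Λ2| * |log Λ2|) with hM
  set K := (al * Oml + bl * Omk) / (al * bl * Oml * Omk) with hK
  have hKp : 0 < K := by positivity
  set δ := min 1 (min Λ1 Λ2) with hδdef
  have hδp : 0 < δ := lt_min one_pos (lt_min hΛ1p hΛ2p)
  have habs : ∀ a b c d e : ℝ, |a + b + c - d - e| ≤ |a| + |b| + |c| + |d| + |e| := by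
    intro a b c d e
    calc |a + b + c - d - e| ≤ |a + b + c - d| + |e| := abs_sub _ _
      _ ≤ |a + b + c| + |d| + |e| := by linarith [abs_sub (a + b + c) d]
      _ ≤ |a + b| + |c| + |d| + |e| := by linarith [abs_add_le (a + b) c]
      _ ≤ |a| + |b| + |c| + |d| + |e| := by linarith [abs_add_le a b]
  have hbound : ∀ ρ : ℝ, 1 ≤ ρ → K / δ ≤ ρ → |R ρ| ≤ M := by
    intro ρ hρ1 hρδ
    have hρp : 0 < ρ := lt_of_lt_of_le one_pos hρ1
    have hΨeq : Ψ ρ = K / ρ := by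
      rw [hΨ, hK, div_div]
      congr 1
      ring
    have hΨp : 0 < Ψ ρ := by rw [hΨeq]; positivity
    have hΨδ : Ψ ρ ≤ δ := by
      rw [hΨeq, div_le_iff₀ hρp]
      calc K = (K / δ) * δ := by field_simp
        _ ≤ ρ * δ := by apply mul_le_mul_of_nonneg_right hρδ hδp.le
        _ = δ * ρ := mul_comm _ _
    have hΨ1 : Ψ ρ ≤ 1 := hΨδ.trans (min_le_left _ _)
    have hy2p : 0 < Ψ ρ / Λ1 := div_pos hΨp hΛ1p
    have hy2le : Ψ ρ / Λ1 ≤ 1 :=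
      (div_le_one hΛ1p).2 (hΨδ.trans ((min_le_right _ _).trans (min_le_left _ _)))
    have hy3p : 0 < Ψ ρ / Λ2 := div_pos hΨp hΛ2p
    have hy3le : Ψ ρ / Λ2 ≤ 1 :=
      (div_le_one hΛ2p).2 (hΨδ.trans ((min_le_right _ _).trans (min_le_right _ _)))
    have e2 : log (Ψ ρ / Λ1) = log (Ψ ρ) - log Λ1 := log_div (ne_of_gt hΨp) hΛ1n
    have e3 : log (Ψ ρ / Λ2) = log (Ψ ρ) - log Λ2 := log_div (ne_of_gt hΨp) hΛ2n
    have hRρ : R ρ = -c *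
        (A * (exp (Ψ ρ) * expIntegralEi (-(Ψ ρ)) - log (Ψ ρ))
        + (B / Λ1) * (exp (Ψ ρ / Λ1) * expIntegralEi (-(Ψ ρ / Λ1)) - log (Ψ ρ / Λ1))
        + (C / Λ2) * (exp (Ψ ρ / Λ2) * expIntegralEi (-(Ψ ρ / Λ2)) - log (Ψ ρ / Λ2))
        - (B / Λ1) * log Λ1 - (C / Λ2) * log Λ2) := by
      rw [hR ρ, e2, e3, hc]
      linear_combination (-(1 / (2 * log 2)) * log (Ψ ρ)) * hS
    have t1 := F_bound hΨp hΨ1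
    have t2 := F_bound hy2p hy2le
    have t3 := F_bound hy3p hy3le
    rw [hRρ, neg_mul, abs_neg, abs_mul]
    rw [hM]
    apply mul_le_mul_of_nonneg_left _ (abs_nonneg c)
    refine (habs _ _ _ _ _).trans ?_
    have b1 : |A * (exp (Ψ ρ) * expIntegralEi (-(Ψ ρ)) - log (Ψ ρ))| ≤ 7 * |A| := by
      rw [abs_mul, mul_comm]
      exact mul_le_mul_of_nonneg_right t1 (abs_nonneg _)
    have b2 : |(B / Λ1) * (exp (Ψ ρ / Λ1) * expIntegralEi (-(Ψ ρ / Λ1)) - log (Ψ ρ / Λ1))|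
        ≤ 7 * |B / Λ1| := by
      rw [abs_mul, mul_comm]
      exact mul_le_mul_of_nonneg_right t2 (abs_nonneg _)
    have b3 : |(C / Λ2) * (exp (Ψ ρ / Λ2) * expIntegralEi (-(Ψ ρ / Λ2)) - log (Ψ ρ / Λ2))|
        ≤ 7 * |C / Λ2| := by
      rw [abs_mul, mul_comm]
      exact mul_le_mul_of_nonneg_right t3 (abs_nonneg _)
    have b4 : |(B / Λ1) * log Λ1| = |B / Λ1| * |log Λ1| := abs_mul _ _
    have b5 : |(C / Λ2) * log Λ2| = |C / Λ2| * |log Λ2| := abs_mul _ _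
    linarith
  refine squeeze_zero_norm' (a := fun ρ => M / logb 2 ρ) ?_ ?_
  · filter_upwards [eventually_ge_atTop (K / δ), eventually_ge_atTop (2 : ℝ)] with ρ hρδ hρ2
    have hρ1 : (1 : ℝ) ≤ ρ := by linarith
    have hlb : 0 < logb 2 ρ := logb_pos one_lt_two (by linarith)
    rw [Real.norm_eq_abs, abs_div, abs_of_pos hlb]
    gcongr
    exact hbound ρ hρ1 hρδ
  · exact Tendsto.div_atTop tendsto_const_nhds (tendsto_logb_atTop one_lt_two)
end

section
/- Let X_l, X_t be independent exponentially distributed random variables with means Ω_l, Ω_t > 0 and let a_l, a_t > 0, γ > 0. Then lim_{ρ→∞} P( ρ a_l X_l/(ρ a_t X_t + 1) > γ ) = 1/(1 + γ a_t Ω_t/(a_l Ω_l)), which is strictly less than 1. Consequently the outage probability P(SINR ≤ γ) has a nonzero limit (error floor) as ρ → ∞. -/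
open MeasureTheory ProbabilityTheory Real Filter

lemma my_expMeasure_Iic {r : ℝ} (hr : 0 < r) (x : ℝ) :
    expMeasure r (Set.Iic x) = ENNReal.ofReal (if 0 ≤ x then 1 - rexp (-(r * x)) else 0) := by
  rw [expMeasure, gammaMeasure, withDensity_apply _ measurableSet_Iic]
  exact lintegral_exponentialPDF_eq_antiDeriv hr x

lemma my_expMeasure_Ioi {r : ℝ} (hr : 0 < r) {x : ℝ} (hx : 0 ≤ x) :
    expMeasure r (Set.Ioi x) = ENNReal.ofReal (rexp (-(r * x))) := by
  have : IsProbabilityMeasure (expMeasure r) := isProbabilityMeasure_expMeasure hr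
  have h1 : Set.Ioi x = (Set.Iic x)ᶜ := by simp
  rw [h1, measure_compl measurableSet_Iic (measure_ne_top _ _), my_expMeasure_Iic hr,
    if_pos hx, measure_univ]
  rw [← ENNReal.ofReal_one, ← ENNReal.ofReal_sub _ (by
    have := Real.exp_le_one_iff.2 (by nlinarith : -(r*x) ≤ 0)
    have := Real.exp_pos (-(r*x)); linarith)]
  norm_num

lemma key_prob {Ω' : Type*} [MeasurableSpace Ω'] (μ : Measure Ω') [IsProbabilityMeasure μ]
    (Xl Xt : Ω' → ℝ) (r s c d : ℝ) (hr : 0 < r) (hs : 0 < s) (hc : 0 < c) (hd : 0 ≤ d)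
    (hmXl : Measurable Xl) (hmXt : Measurable Xt) (hindep : IndepFun Xl Xt μ)
    (hXl : Measure.map Xl μ = expMeasure r) (hXt : Measure.map Xt μ = expMeasure s) :
    μ {ω | c * Xt ω + d < Xl ω} = ENNReal.ofReal (rexp (-(r * d)) * (s / (s + r * c))) := by
  have hpr : IsProbabilityMeasure (expMeasure r) := isProbabilityMeasure_expMeasure hr
  have hps : IsProbabilityMeasure (expMeasure s) := isProbabilityMeasure_expMeasure hs
  have hmap : μ.map (fun ω => (Xt ω, Xl ω)) = (expMeasure s).prod (expMeasure r) := by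
    rw [← hXt, ← hXl]
    exact (indepFun_iff_map_prod_eq_prod_map_map hmXt.aemeasurable hmXl.aemeasurable).mp
      hindep.symm
  set S : Set (ℝ × ℝ) := {p | c * p.1 + d < p.2} with hSdef
  have hS : MeasurableSet S := measurableSet_lt ((measurable_fst.const_mul c).add_const d)
    measurable_snd
  have h1 : {ω | c * Xt ω + d < Xl ω} = (fun ω => (Xt ω, Xl ω)) ⁻¹' S := rfl
  rw [h1, ← Measure.map_apply (hmXt.prodMk hmXl) hS, hmap, Measure.prod_apply hS]
  have hsec : ∀ y : ℝ, (Prod.mk y ⁻¹' S) = Set.Ioi (c * y + d) := fun y => rfl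
  simp only [hsec]
  have hpdfmeas : Measurable (gammaPDF 1 s) := (measurable_gammaPDFReal 1 s).ennreal_ofReal
  rw [expMeasure, gammaMeasure,
    lintegral_withDensity_eq_lintegral_mul_non_measurable _ hpdfmeas
      (ae_of_all _ (fun y => by rw [gammaPDF]; exact ENNReal.ofReal_lt_top))]
  have hsum : 0 < s + r * c := by positivity
  have hpt : ∀ y : ℝ, gammaPDF 1 s y * expMeasure r (Set.Ioi (c * y + d))
      = ENNReal.ofReal (rexp (-(r * d)) * (s / (s + r * c))) * exponentialPDF (s + r * c) y := by
    intro y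
    have hgp : gammaPDF 1 s y = exponentialPDF s y := rfl
    rw [hgp]
    by_cases hy : 0 ≤ y
    · rw [exponentialPDF_of_nonneg hy, exponentialPDF_of_nonneg hy,
        my_expMeasure_Ioi hr (by positivity),
        ← ENNReal.ofReal_mul (by positivity), ← ENNReal.ofReal_mul (by positivity)]
      congr 1
      have h4 : rexp (-(s * y)) * rexp (-(r * (c * y + d)))
          = rexp (-(r * d)) * rexp (-((s + r * c) * y)) := by
        rw [← Real.exp_add, ← Real.exp_add]; ring_nf
      rw [mul_assoc, h4]
      field_simp
    · rw [exponentialPDF_of_neg (lt_of_not_ge hy), exponentialPDF_of_neg (lt_of_not_ge hy)]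
      simp
  simp only [Pi.mul_apply]
  have hm2 : Measurable (exponentialPDF (s + r * c)) :=
    (measurable_exponentialPDFReal _).ennreal_ofReal
  rw [lintegral_congr hpt, lintegral_const_mul _ hm2,
    lintegral_exponentialPDF_eq_one hsum, mul_one]

/-- Error floor of the uplink-NOMA-type SINR: the non-outage probability tends to
`1/(1 + γ a_t Ω_t/(a_l Ω_l)) < 1` as `ρ → ∞`. -/
theorem sinr_error_floor
    {Ω' : Type*} [MeasurableSpace Ω'] (μ : Measure Ω') [IsProbabilityMeasure μ]
    (Xl Xt : Ω' → ℝ) (Oml Omt al at_ γ : ℝ)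
    (hOml : 0 < Oml) (hOmt : 0 < Omt) (hal : 0 < al) (hat : 0 < at_) (hγ : 0 < γ)
    (hmXl : Measurable Xl) (hmXt : Measurable Xt)
    (hindep : IndepFun Xl Xt μ)
    (hXl : Measure.map Xl μ = expMeasure (1 / Oml))
    (hXt : Measure.map Xt μ = expMeasure (1 / Omt)) :
    Tendsto (fun ρ : ℝ =>
        (μ {ω | ρ * al * Xl ω / (ρ * at_ * Xt ω + 1) > γ}).toReal)
      atTop (nhds (1 / (1 + γ * at_ * Omt / (al * Oml)))) ∧
    1 / (1 + γ * at_ * Omt / (al * Oml)) < 1 := by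
  have hr : (0:ℝ) < 1 / Oml := by positivity
  have hs : (0:ℝ) < 1 / Omt := by positivity
  have hc : (0:ℝ) < γ * at_ / al := by positivity
  have hTpos : (0:ℝ) < 1 / (1 + γ * at_ * Omt / (al * Oml)) := by positivity
  have hTeq : (1/Omt) / (1/Omt + (1/Oml) * (γ * at_ / al))
      = 1 / (1 + γ * at_ * Omt / (al * Oml)) := by
    rw [div_eq_div_iff (by positivity) (by positivity)]
    field_simp
  have hN : μ {ω | Xt ω ≤ 0} = 0 := by
    have h1 : {ω | Xt ω ≤ 0} = Xt ⁻¹' Set.Iic 0 := rfl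
    rw [h1, ← Measure.map_apply hmXt measurableSet_Iic, hXt, my_expMeasure_Iic hs]
    norm_num
  -- upper bound
  have hupper : ∀ ρ : ℝ, 1 ≤ ρ →
      μ {ω | ρ * al * Xl ω / (ρ * at_ * Xt ω + 1) > γ}
        ≤ ENNReal.ofReal (1 / (1 + γ * at_ * Omt / (al * Oml))) := by
    intro ρ hρ
    have hsub : {ω | ρ * al * Xl ω / (ρ * at_ * Xt ω + 1) > γ}
        ⊆ {ω | (γ * at_ / al) * Xt ω + 0 < Xl ω} ∪ {ω | Xt ω ≤ 0} := by
      intro ω hω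
      simp only [Set.mem_setOf_eq, Set.mem_union] at *
      by_cases ht : Xt ω ≤ 0
      · exact Or.inr ht
      · left
        push_neg at ht
        have hD : 0 < ρ * at_ * Xt ω + 1 := by
          have := mul_pos (mul_pos (lt_of_lt_of_le one_pos hρ) hat) ht
          linarith
        have h2 := (lt_div_iff₀ hD).mp hω
        have h3 : γ * at_ * Xt ω < al * Xl ω := by nlinarith
        rw [add_zero, div_mul_eq_mul_div, div_lt_iff₀ hal]
        linarith
    calc μ {ω | ρ * al * Xl ω / (ρ * at_ * Xt ω + 1) > γ}
        ≤ μ ({ω | (γ * at_ / al) * Xt ω + 0 < Xl ω} ∪ {ω | Xt ω ≤ 0}) := measure_mono hsub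
      _ ≤ μ {ω | (γ * at_ / al) * Xt ω + 0 < Xl ω} + μ {ω | Xt ω ≤ 0} := measure_union_le _ _
      _ = ENNReal.ofReal (1 / (1 + γ * at_ * Omt / (al * Oml))) := by
          rw [hN, add_zero,
            key_prob μ Xl Xt (1/Oml) (1/Omt) (γ * at_ / al) 0 hr hs hc le_rfl hmXl hmXt
              hindep hXl hXt, mul_zero, neg_zero, Real.exp_zero, one_mul, hTeq]
  -- lower bound
  have hlow : ∀ ρ : ℝ, 1 ≤ ρ →
      ENNReal.ofReal (rexp (-(1/Oml * (γ/(ρ*al)))) * (1 / (1 + γ * at_ * Omt / (al * Oml))))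
        ≤ μ {ω | ρ * al * Xl ω / (ρ * at_ * Xt ω + 1) > γ} := by
    intro ρ hρ
    have hρ0 : (0:ℝ) < ρ := lt_of_lt_of_le one_pos hρ
    have hd : (0:ℝ) ≤ γ/(ρ*al) := by positivity
    have hkey := key_prob μ Xl Xt (1/Oml) (1/Omt) (γ * at_ / al) (γ/(ρ*al)) hr hs hc hd
      hmXl hmXt hindep hXl hXt
    rw [hTeq] at hkey
    have hsub : {ω | (γ * at_ / al) * Xt ω + γ/(ρ*al) < Xl ω} \ {ω | Xt ω ≤ 0}
        ⊆ {ω | ρ * al * Xl ω / (ρ * at_ * Xt ω + 1) > γ} := by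
      intro ω hω
      obtain ⟨hx, ht⟩ := hω
      simp only [Set.mem_setOf_eq] at *
      push_neg at ht
      have hD : 0 < ρ * at_ * Xt ω + 1 := by
        have := mul_pos (mul_pos hρ0 hat) ht
        linarith
      rw [gt_iff_lt, lt_div_iff₀ hD]
      have h5 : ρ * al * ((γ * at_ / al) * Xt ω + γ/(ρ*al))
          = γ * (ρ * at_ * Xt ω) + γ := by field_simp
      nlinarith [mul_lt_mul_of_pos_left hx (show (0:ℝ) < ρ * al by positivity)]
    calc ENNReal.ofReal (rexp (-(1/Oml * (γ/(ρ*al)))) * (1 / (1 + γ * at_ * Omt / (al * Oml))))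
        = μ ({ω | (γ * at_ / al) * Xt ω + γ/(ρ*al) < Xl ω} \ {ω | Xt ω ≤ 0}) := by
          rw [measure_diff_null hN, hkey]
      _ ≤ _ := measure_mono hsub
  constructor
  · have hT : Tendsto (fun ρ : ℝ =>
        rexp (-(1/Oml * (γ/(ρ*al)))) * (1 / (1 + γ * at_ * Omt / (al * Oml))))
        atTop (nhds (1 / (1 + γ * at_ * Omt / (al * Oml)))) := by
      have h0 : Tendsto (fun ρ:ℝ => γ/(ρ*al)) atTop (nhds 0) :=
        Tendsto.div_atTop tendsto_const_nhds (Tendsto.atTop_mul_const hal tendsto_id)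
      have h1 : Tendsto (fun ρ:ℝ => -(1/Oml * (γ/(ρ*al)))) atTop (nhds 0) := by
        have := (h0.const_mul (1/Oml)).neg
        simpa using this
      have h2 : Tendsto (fun ρ:ℝ => rexp (-(1/Oml * (γ/(ρ*al))))) atTop (nhds 1) := by
        have := (Real.continuous_exp.tendsto 0).comp h1
        simpa [Function.comp_def] using this
      have := h2.mul_const (1 / (1 + γ * at_ * Omt / (al * Oml)))
      simpa using this
    refine tendsto_of_tendsto_of_tendsto_of_le_of_le' hT tendsto_const_nhds ?_ ?_
    · filter_upwards [eventually_ge_atTop (1:ℝ)] with ρ hρ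
      exact (ENNReal.ofReal_le_iff_le_toReal (measure_ne_top μ _)).mp (hlow ρ hρ)
    · filter_upwards [eventually_ge_atTop (1:ℝ)] with ρ hρ
      exact ENNReal.toReal_le_of_le_ofReal hTpos.le (hupper ρ hρ)
  · rw [div_lt_one (by positivity)]
    have : (0:ℝ) < γ * at_ * Omt / (al * Oml) := by positivity
    linarith
end
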